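/- In any tree T, the number of vertices of odd degree is even, and the odd-degree vertices can be paired so that the paths in T connecting each pair are pairwise edge-disjoint. -/

import Mathlib

open Finset

section Aux

open SimpleGraph

variable {V : Type*} [Fintype V] [DecidableEq V]

private lemma tree_path_length {T : SimpleGraph V} (hT : T.IsTree) {u v : V}
    (w : T.Walk u v) (hw : w.IsPath) : w.length = T.dist u v := by
  obtain ⟨p, hp, hl⟩ := hT.isConnected.exists_path_of_dist u v
  have h : (⟨w, hw⟩ : T.Path u v) = ⟨p, hp⟩ := hT.IsAcyclic.path_unique _ _
  have : w = p := congrArg Subtype.val h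
  rw [this, hl]

private lemma tree_dist_decomp {T : SimpleGraph V} (hT : T.IsTree) {u v z : V}
    (w : T.Walk u v) (hw : w.IsPath) (hz : z ∈ w.support) :
    T.dist u v = T.dist u z + T.dist z v := by
  rw [← tree_path_length hT w hw, ← tree_path_length hT _ (hw.takeUntil hz),
    ← tree_path_length hT _ (hw.dropUntil hz)]
  have := congrArg SimpleGraph.Walk.length (w.take_spec hz)
  rw [SimpleGraph.Walk.length_append] at this
  omega

private lemma reach_avoid {T : SimpleGraph V} {e : Sym2 V} {u v : V} (w : T.Walk u v)
    (h : e ∉ w.edges) : (T \ fromEdgeSet {e}).Reachable u v :=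
  ⟨w.toDeleteEdges {e} (fun e' he' h' => h ((Set.mem_singleton_iff.mp h') ▸ he'))⟩

private lemma cross {T : SimpleGraph V} {x y : V} {u v : V} (w : T.Walk u v)
    (hnd : w.edges.Nodup) (he : s(x, y) ∈ w.edges) :
    ((T \ fromEdgeSet {s(x, y)}).Reachable u x ∧ (T \ fromEdgeSet {s(x, y)}).Reachable v y) ∨
    ((T \ fromEdgeSet {s(x, y)}).Reachable u y ∧ (T \ fromEdgeSet {s(x, y)}).Reachable v x) := by
  induction w with
  | nil => simp at he
  | @cons a b v hadj w ih =>
    rw [SimpleGraph.Walk.edges_cons] at he hnd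
    rcases List.nodup_cons.mp hnd with ⟨hab, hnd'⟩
    rcases List.mem_cons.mp he with h1 | h1
    · -- first edge is e
      have hnm : s(x, y) ∉ w.edges := by rw [h1]; exact hab
      rcases Sym2.eq_iff.mp h1 with ⟨hx, hy⟩ | ⟨hy, hx⟩
      · subst hx; subst hy
        exact Or.inl ⟨Reachable.refl _, (reach_avoid w hnm).symm⟩
      · subst hx; subst hy
        exact Or.inr ⟨Reachable.refl _, (reach_avoid w hnm).symm⟩
    · have hne : ¬ (fromEdgeSet {s(x, y)}).Adj a b := by
        intro h2
        rw [SimpleGraph.fromEdgeSet_adj, Set.mem_singleton_iff] at h2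
        exact hab (h2.1 ▸ h1)
      have hadj' : (T \ fromEdgeSet {s(x, y)}).Adj a b := ⟨hadj, hne⟩
      rcases ih hnd' h1 with ⟨hbx, hvy⟩ | ⟨hby, hvx⟩
      · exact Or.inl ⟨hadj'.reachable.trans hbx, hvy⟩
      · exact Or.inr ⟨hadj'.reachable.trans hby, hvx⟩

private lemma key_eq {T : SimpleGraph V} (hT : T.IsTree) {x y a b : V}
    (hbr : ¬(T \ fromEdgeSet {s(x, y)}).Reachable x y)
    (w : T.Walk a b) (hw : w.IsPath) (he : s(x, y) ∈ w.edges)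
    (ha : (T \ fromEdgeSet {s(x, y)}).Reachable a x) :
    T.dist a b = T.dist a x + 1 + T.dist y b := by
  have hadj : T.Adj x y := by
    have := w.edges_subset_edgeSet he; rwa [SimpleGraph.mem_edgeSet] at this
  have hx : x ∈ w.support := w.fst_mem_support_of_mem_edges he
  have hd1 : T.dist a b = T.dist a x + T.dist x b := tree_dist_decomp hT w hw hx
  have hmem : s(x, y) ∈ (w.takeUntil x hx).edges ++ (w.dropUntil x hx).edges := by
    rw [← SimpleGraph.Walk.edges_append, w.take_spec hx]; exact he
  have hee : s(x, y) ∈ (w.dropUntil x hx).edges := by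
    rcases List.mem_append.mp hmem with h | h
    · exfalso
      rcases cross _ (hw.takeUntil hx).isTrail.edges_nodup h with ⟨h1, h2⟩ | ⟨h1, h2⟩
      · exact hbr h2
      · exact hbr ((h1.symm.trans ha).symm)
    · exact h
  have hy : y ∈ (w.dropUntil x hx).support :=
    SimpleGraph.Walk.snd_mem_support_of_mem_edges _ hee
  have hd2 : T.dist x b = T.dist x y + T.dist y b :=
    tree_dist_decomp hT _ (hw.dropUntil hx) hy
  have h1 : T.dist x y = 1 := SimpleGraph.dist_eq_one_iff_adj.mpr hadj
  omega

private lemma pairing_exists : ∀ (n : ℕ) (s : Finset V), s.card = 2 * n →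
    ∃ M : Finset (V × V), (∀ p ∈ M, p.1 ≠ p.2) ∧
      M.val.map Prod.fst + M.val.map Prod.snd = s.val := by
  intro n
  induction n with
  | zero =>
    intro s hs
    refine ⟨∅, by simp, ?_⟩
    rw [Finset.card_eq_zero.mp hs]
    simp
  | succ n ih =>
    intro s hs
    obtain ⟨a, ha⟩ : s.Nonempty := Finset.card_pos.mp (by omega)
    obtain ⟨b, hb⟩ : (s.erase a).Nonempty :=
      Finset.card_pos.mp (by rw [Finset.card_erase_of_mem ha]; omega)
    obtain ⟨M, hM1, hM2⟩ := ih ((s.erase a).erase b)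
      (by rw [Finset.card_erase_of_mem hb, Finset.card_erase_of_mem ha]; omega)
    have hba : b ≠ a := (Finset.mem_erase.mp hb).1
    have hnm : (a, b) ∉ M := by
      intro h
      have h1 : a ∈ ((s.erase a).erase b).val := by
        rw [← hM2]
        exact Multiset.mem_add.mpr (Or.inl (Multiset.mem_map_of_mem _ h))
      have h2 : a ∈ (s.erase a).erase b := h1
      exact (Finset.mem_erase.mp (Finset.mem_of_mem_erase h2)).1 rfl
    refine ⟨insert (a, b) M, ?_, ?_⟩
    · intro p hp
      rcases Finset.mem_insert.mp hp with h | h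
      · rw [h]; exact hba.symm
      · exact hM1 p h
    · have e1 : a ::ₘ (s.erase a).val = s.val := by
        rw [Finset.erase_val]; exact Multiset.cons_erase ha
      have e2 : b ::ₘ ((s.erase a).erase b).val = (s.erase a).val := by
        rw [Finset.erase_val ((s.erase a))]; exact Multiset.cons_erase hb
      rw [Finset.insert_val_of_notMem hnm, Multiset.map_cons, Multiset.map_cons]
      rw [Multiset.cons_add, Multiset.add_cons, hM2, e2, e1]

private lemma exchange {T : SimpleGraph V} (hconn : T.Connected) {s : Finset V}
    (M : Finset (V × V))
    (hsum : M.val.map Prod.fst + M.val.map Prod.snd = s.val)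
    (hmin : ∀ M' : Finset (V × V), (∀ p ∈ M', p.1 ≠ p.2) →
      (M'.val.map Prod.fst + M'.val.map Prod.snd = s.val) →
      (∑ p ∈ M, T.dist p.1 p.2) ≤ ∑ p ∈ M', T.dist p.1 p.2)
    (hne : ∀ p ∈ M, p.1 ≠ p.2)
    {a b c d x y : V} (hp : (a, b) ∈ M) (hq : (c, d) ∈ M) (hpq : (a, b) ≠ (c, d))
    (h1 : T.dist a b = T.dist a x + 1 + T.dist y b)
    (h2 : T.dist c d = T.dist c x + 1 + T.dist y d ∨
          T.dist c d = T.dist d x + 1 + T.dist y c) : False := by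
  classical
  set M₂ := (M.erase (a, b)).erase (c, d) with hM₂
  have hq2 : (c, d) ∈ M.erase (a, b) := Finset.mem_erase.mpr ⟨hpq.symm, hq⟩
  have e1 : (a, b) ::ₘ (M.erase (a, b)).val = M.val := by
    rw [Finset.erase_val]; exact Multiset.cons_erase hp
  have e2 : (c, d) ::ₘ M₂.val = (M.erase (a, b)).val := by
    rw [hM₂, Finset.erase_val]; exact Multiset.cons_erase hq2
  have hMval : M.val = (a, b) ::ₘ (c, d) ::ₘ M₂.val := by rw [e2, e1]
  set F := M₂.val.map Prod.fst with hF
  set S := M₂.val.map Prod.snd with hS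
  have hFm : M.val.map Prod.fst = a ::ₘ c ::ₘ F := by
    rw [hMval, Multiset.map_cons, Multiset.map_cons]
  have hSm : M.val.map Prod.snd = b ::ₘ d ::ₘ S := by
    rw [hMval, Multiset.map_cons, Multiset.map_cons]
  have hnodup : ((a ::ₘ c ::ₘ F) + (b ::ₘ d ::ₘ S)).Nodup := by
    rw [← hFm, ← hSm, hsum]; exact s.nodup
  obtain ⟨hFnd, hSnd, hdisj⟩ := Multiset.nodup_add.mp hnodup
  have hac : a ≠ c := by
    intro h; rw [Multiset.nodup_cons] at hFnd; exact hFnd.1 (h ▸ Multiset.mem_cons_self c F)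
  have haF : a ∉ F := by
    rw [Multiset.nodup_cons] at hFnd
    exact fun h => hFnd.1 (Multiset.mem_cons_of_mem h)
  have hcF : c ∉ F := by
    rw [Multiset.nodup_cons, Multiset.nodup_cons] at hFnd; exact hFnd.2.1
  have hbd : b ≠ d := by
    intro h; rw [Multiset.nodup_cons] at hSnd; exact hSnd.1 (h ▸ Multiset.mem_cons_self d S)
  have hbS : b ∉ S := by
    rw [Multiset.nodup_cons] at hSnd
    exact fun h => hSnd.1 (Multiset.mem_cons_of_mem h)
  have hdS : d ∉ S := by
    rw [Multiset.nodup_cons, Multiset.nodup_cons] at hSnd; exact hSnd.2.1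
  have hdisj' : ∀ z : V, z ∈ (a ::ₘ c ::ₘ F) → z ∈ (b ::ₘ d ::ₘ S) → False := fun z hz hz' =>
    Multiset.disjoint_left.mp hdisj hz hz'
  have hamem : a ∈ (a ::ₘ c ::ₘ F) := Multiset.mem_cons_self _ _
  have hcmem : c ∈ (a ::ₘ c ::ₘ F) := Multiset.mem_cons_of_mem (Multiset.mem_cons_self _ _)
  have hbmem : b ∈ (b ::ₘ d ::ₘ S) := Multiset.mem_cons_self _ _
  have hdmem : d ∈ (b ::ₘ d ::ₘ S) := Multiset.mem_cons_of_mem (Multiset.mem_cons_self _ _)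
  have hab : a ≠ b := fun h => hdisj' a hamem (h ▸ hbmem)
  have had : a ≠ d := fun h => hdisj' a hamem (h ▸ hdmem)
  have hcb : c ≠ b := fun h => hdisj' c hcmem (h ▸ hbmem)
  have hcd : c ≠ d := fun h => hdisj' c hcmem (h ▸ hdmem)
  have memF : ∀ p : V × V, p ∈ M₂ → p.1 ∈ (a ::ₘ c ::ₘ F) ∧ p.2 ∈ (b ::ₘ d ::ₘ S) := by
    intro p hpm
    constructor
    · exact Multiset.mem_cons_of_mem (Multiset.mem_cons_of_mem
        (Multiset.mem_map_of_mem _ hpm))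
    · exact Multiset.mem_cons_of_mem (Multiset.mem_cons_of_mem
        (Multiset.mem_map_of_mem _ hpm))
  have hsub : ∀ p : V × V, p ∈ M₂ → p ∈ M := fun p hpm =>
    Finset.mem_of_mem_erase (Finset.mem_of_mem_erase hpm)
  have hWM : (∑ p ∈ M, T.dist p.1 p.2) =
      T.dist a b + (T.dist c d + ∑ p ∈ M₂, T.dist p.1 p.2) := by
    rw [← Finset.add_sum_erase _ _ hp, ← Finset.add_sum_erase _ _ hq2, ← hM₂]
  -- helper to finish given a new pairing
  have finish : ∀ u₁ u₂ v₁ v₂ : V, (u₁, u₂) ∉ M₂ → (v₁, v₂) ∉ M₂ → (u₁, u₂) ≠ (v₁, v₂) →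
      u₁ ≠ u₂ → v₁ ≠ v₂ →
      ((u₁ ::ₘ v₁ ::ₘ F) + (u₂ ::ₘ v₂ ::ₘ S) = (a ::ₘ c ::ₘ F) + (b ::ₘ d ::ₘ S)) →
      (T.dist u₁ u₂ + T.dist v₁ v₂ < T.dist a b + T.dist c d) → False := by
    intro u₁ u₂ v₁ v₂ hu hv huv hu12 hv12 hmeq hlt
    set M'' : Finset (V × V) := insert (u₁, u₂) (insert (v₁, v₂) M₂) with hM''
    have hvmem : (u₁, u₂) ∉ insert (v₁, v₂) M₂ := by
      rw [Finset.mem_insert]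
      rintro (h | h)
      · exact huv h
      · exact hu h
    have hval'' : M''.val = (u₁, u₂) ::ₘ (v₁, v₂) ::ₘ M₂.val := by
      rw [hM'', Finset.insert_val_of_notMem hvmem, Finset.insert_val_of_notMem hv]
    have hne'' : ∀ p ∈ M'', p.1 ≠ p.2 := by
      intro p hpm
      rcases Finset.mem_insert.mp hpm with h | h
      · rw [h]; exact hu12
      rcases Finset.mem_insert.mp h with h | h
      · rw [h]; exact hv12
      · exact hne p (hsub p h)
    have hsum'' : M''.val.map Prod.fst + M''.val.map Prod.snd = s.val := by
      rw [hval'', Multiset.map_cons, Multiset.map_cons, Multiset.map_cons,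
        Multiset.map_cons, ← hF, ← hS, hmeq, ← hFm, ← hSm, hsum]
    have hle := hmin M'' hne'' hsum''
    have hW'' : (∑ p ∈ M'', T.dist p.1 p.2) =
        T.dist u₁ u₂ + (T.dist v₁ v₂ + ∑ p ∈ M₂, T.dist p.1 p.2) := by
      rw [hM'', Finset.sum_insert hvmem, Finset.sum_insert hv]
    omega
  rcases h2 with h2 | h2
  · -- new pairs (a,c), (b,d)
    have hbdM : (b, d) ∉ M₂ := fun h => hdisj' b (memF _ h).1 hbmem
    have hacM : (a, c) ∉ M₂ := by
      intro h
      have := Multiset.mem_map_of_mem (Prod.fst) h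
      rw [← hF] at this
      exact haF this
    refine finish a c b d hacM hbdM (by simp [hab]) hac hbd ?_ ?_
    · simp only [← Multiset.singleton_add]; abel
    · have t1 : T.dist a c ≤ T.dist a x + T.dist x c := hconn.dist_triangle
      have t2 : T.dist b d ≤ T.dist b y + T.dist y d := hconn.dist_triangle
      have c1 : T.dist x c = T.dist c x := SimpleGraph.dist_comm ..
      have c2 : T.dist b y = T.dist y b := SimpleGraph.dist_comm ..
      omega
  · -- new pairs (a,d), (b,c)
    have hbcM : (b, c) ∉ M₂ := fun h => hdisj' b (memF _ h).1 hbmem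
    have hadM : (a, d) ∉ M₂ := by
      intro h
      have := Multiset.mem_map_of_mem (Prod.fst) h
      rw [← hF] at this
      exact haF this
    refine finish a d b c hadM hbcM (by simp [hab]) had hcb.symm ?_ ?_
    · simp only [← Multiset.singleton_add]; abel
    · have t1 : T.dist a d ≤ T.dist a x + T.dist x d := hconn.dist_triangle
      have t2 : T.dist b c ≤ T.dist b y + T.dist y c := hconn.dist_triangle
      have c1 : T.dist x d = T.dist d x := SimpleGraph.dist_comm ..
      have c2 : T.dist b y = T.dist y b := SimpleGraph.dist_comm ..
      omega

end Aux

/-- In any finite tree `T`, the number of odd-degree vertices is even, and the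
odd-degree vertices can be paired up so that the (unique) paths in `T`
connecting the two vertices of each pair are pairwise edge-disjoint. -/
theorem stmt_3 {V : Type*} [Fintype V] [DecidableEq V]
    (T : SimpleGraph V) [DecidableRel T.Adj] (hT : T.IsTree) :
    Even (Finset.univ.filter (fun v => Odd (T.degree v))).card ∧
    ∃ M : Finset (V × V),
      (∀ p ∈ M, p.1 ≠ p.2) ∧
      (M.val.map Prod.fst + M.val.map Prod.snd =
        (Finset.univ.filter (fun v => Odd (T.degree v))).val) ∧
      (∀ p ∈ M, ∀ q ∈ M, p ≠ q →
        ∀ (w : T.Walk p.1 p.2) (w' : T.Walk q.1 q.2),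
          w.IsPath → w'.IsPath → ∀ e, e ∈ w.edges → e ∉ w'.edges) := by
  classical
  have heven := T.even_card_odd_degree_vertices
  refine ⟨heven, ?_⟩
  set s : Finset V := Finset.univ.filter (fun v => Odd (T.degree v)) with hsdef
  obtain ⟨n, hn⟩ := heven
  obtain ⟨M₀, hM₀1, hM₀2⟩ := pairing_exists n s (by omega)
  obtain ⟨M, hMmem, hMmin⟩ := Finset.exists_min_image
    (Finset.univ.filter fun M : Finset (V × V) => (∀ p ∈ M, p.1 ≠ p.2) ∧
      (M.val.map Prod.fst + M.val.map Prod.snd = s.val))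
    (fun M => ∑ p ∈ M, T.dist p.1 p.2) ⟨M₀, Finset.mem_filter.mpr ⟨Finset.mem_univ _, hM₀1, hM₀2⟩⟩
  rw [Finset.mem_filter] at hMmem
  obtain ⟨-, hMne, hMsum⟩ := hMmem
  have hmin' : ∀ M' : Finset (V × V), (∀ p ∈ M', p.1 ≠ p.2) →
      (M'.val.map Prod.fst + M'.val.map Prod.snd = s.val) →
      (∑ p ∈ M, T.dist p.1 p.2) ≤ ∑ p ∈ M', T.dist p.1 p.2 := by
    intro M' h1 h2
    exact hMmin M' (Finset.mem_filter.mpr ⟨Finset.mem_univ _, h1, h2⟩)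
  refine ⟨M, hMne, hMsum, ?_⟩
  rintro ⟨a, b⟩ hp ⟨c, d⟩ hq hpq w w' hw hw' e hew hew'
  induction e using Sym2.ind with
  | _ x y =>
  simp only at hew hew' w w' ⊢
  have hadj : T.Adj x y := by
    have := w.edges_subset_edgeSet hew
    rwa [SimpleGraph.mem_edgeSet] at this
  have hbr : ¬(T \ SimpleGraph.fromEdgeSet {s(x, y)}).Reachable x y :=
    ((SimpleGraph.isAcyclic_iff_forall_adj_isBridge.mp hT.IsAcyclic) hadj)
  have hbr2 : ¬(T \ SimpleGraph.fromEdgeSet {s(y, x)}).Reachable y x := by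
    rw [Sym2.eq_swap]
    exact fun h => hbr h.symm
  -- key_eq specialized for swapped x y
  have key_eq' : ∀ {a b : V} (w : T.Walk a b), w.IsPath → s(x, y) ∈ w.edges →
      (T \ SimpleGraph.fromEdgeSet {s(x, y)}).Reachable a y →
      T.dist a b = T.dist a y + 1 + T.dist x b := by
    intro a b w hw he ha
    exact key_eq hT hbr2 w hw (by rw [Sym2.eq_swap]; exact he)
      (by rw [Sym2.eq_swap]; exact ha)
  have hrev : s(x, y) ∈ w'.reverse.edges := by
    rw [SimpleGraph.Walk.edges_reverse, List.mem_reverse]; exact hew'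
  rcases cross w hw.isTrail.edges_nodup hew with ⟨ha, hb⟩ | ⟨ha, hb⟩
  · have h1 := key_eq hT hbr w hw hew ha
    rcases cross w' hw'.isTrail.edges_nodup hew' with ⟨hc, hd⟩ | ⟨hc, hd⟩
    · exact exchange hT.isConnected M hMsum hmin' hMne hp hq hpq h1
        (Or.inl (key_eq hT hbr w' hw' hew' hc))
    · have h2 := key_eq hT hbr w'.reverse hw'.reverse hrev hd
      rw [SimpleGraph.dist_comm] at h2
      exact exchange hT.isConnected M hMsum hmin' hMne hp hq hpq h1 (Or.inr h2)
  · have h1 := key_eq' w hw hew ha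
    rcases cross w' hw'.isTrail.edges_nodup hew' with ⟨hc, hd⟩ | ⟨hc, hd⟩
    · have h2 := key_eq' w'.reverse hw'.reverse hrev hd
      rw [SimpleGraph.dist_comm] at h2
      exact exchange hT.isConnected M hMsum hmin' hMne hp hq hpq h1 (Or.inr h2)
    · exact exchange hT.isConnected M hMsum hmin' hMne hp hq hpq h1
        (Or.inl (key_eq' w' hw' hew' hc))
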